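/- Let (X, 𝓕, μ) be a probability space and T : X → X measurable. If μ is T-AMS, then the set function \bar{μ}(A) := lim_{n→∞} (1/n) Σ_{i=0}^{n-1} μ(T^{-i}A) is a probability measure on (X, 𝓕) and is T-stationary, i.e., \bar{μ}(T^{-1}A) = \bar{μ}(A) for all A ∈ 𝓕. -/

import Mathlib

open MeasureTheory Filter Finset
open scoped ENNReal NNReal symmDiff

section Aux

variable {X : Type*} [MeasurableSpace X]

def MSetSp (lam : Measure X) := {A : Set X // MeasurableSet A}

variable (lam : Measure X) [IsFiniteMeasure lam]

omit [IsFiniteMeasure lam] in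
lemma symmDiff_measure_triangle (A B C : Set X) :
    lam (symmDiff A C) ≤ lam (symmDiff A B) + lam (symmDiff B C) :=
  le_trans (measure_mono (Set.subset_def ▸ fun x hx => by
    simp only [Set.mem_union, Set.mem_symmDiff] at *; tauto))
    (measure_union_le _ _)

noncomputable instance : PseudoMetricSpace (MSetSp lam) where
  dist A B := (lam (symmDiff A.1 B.1)).toReal
  dist_self A := by
    show (lam (symmDiff A.1 A.1)).toReal = 0
    simp
  dist_comm A B := by
    show (lam (symmDiff A.1 B.1)).toReal = (lam (symmDiff B.1 A.1)).toReal
    rw [symmDiff_comm]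
  dist_triangle A B C := by
    show (lam (symmDiff A.1 C.1)).toReal ≤ (lam (symmDiff A.1 B.1)).toReal + (lam (symmDiff B.1 C.1)).toReal
    rw [← ENNReal.toReal_add (measure_ne_top _ _) (measure_ne_top _ _)]
    exact ENNReal.toReal_mono (by finiteness) (symmDiff_measure_triangle lam _ _ _)

lemma MSetSp.dist_def (A B : MSetSp lam) : dist A B = (lam (symmDiff A.1 B.1)).toReal := rfl

-- membership switching lemma
lemma stays (u : ℕ → Set X) (x : X) (N : ℕ)
    (h : ∀ k, N ≤ k → ¬ x ∈ symmDiff (u k) (u (k+1))) :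
    ∀ k, N ≤ k → (x ∈ u k ↔ x ∈ u N) := by
  intro k hk
  induction k with
  | zero => simp_all
  | succ k ih =>
    rcases Nat.lt_or_ge N (k+1) with h1 | h1
    · have hNk : N ≤ k := Nat.lt_succ_iff.mp h1
      have := h k hNk
      rw [Set.mem_symmDiff] at this
      rw [← ih hNk]; tauto
    · have : N = k + 1 := le_antisymm hk h1
      simp [this]

lemma symmDiff_limsup_subset (u : ℕ → Set X) (N : ℕ) :
    symmDiff (u N) (⋂ m, ⋃ k, u (m + k)) ⊆ ⋃ k, symmDiff (u (N + k)) (u (N + k + 1)) := by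
  intro x hx
  by_contra hc
  simp only [Set.mem_iUnion, not_exists] at hc
  have hst : ∀ k, N ≤ k → (x ∈ u k ↔ x ∈ u N) := by
    apply stays
    intro k hk hmem
    exact hc (k - N) (by rwa [Nat.add_sub_cancel' hk])
  rw [Set.mem_symmDiff] at hx
  rcases hx with ⟨hxN, hxA⟩ | ⟨hxA, hxN⟩
  · apply hxA
    simp only [Set.mem_iInter, Set.mem_iUnion]
    intro m
    refine ⟨N, ?_⟩
    rw [hst (m + N) (Nat.le_add_left _ _)]; exact hxN
  · simp only [Set.mem_iInter, Set.mem_iUnion] at hxA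
    obtain ⟨k, hk⟩ := hxA N
    exact hxN ((hst (N + k) (Nat.le_add_right _ _)).mp hk)

instance : CompleteSpace (MSetSp lam) := by
  apply Metric.complete_of_convergent_controlled_sequences (fun n => (1/2 : ℝ)^n) (fun n => by positivity)
  intro u hu
  set A : Set X := ⋂ m, ⋃ k, (u (m + k)).1 with hA
  have hAm : MeasurableSet A := MeasurableSet.iInter fun m => MeasurableSet.iUnion fun k => (u (m+k)).2
  refine ⟨⟨A, hAm⟩, ?_⟩
  refine Metric.tendsto_atTop.mpr ?_
  intro ε hε
  -- choose N with 4 * (1/2)^N < ε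
  obtain ⟨N, hN⟩ := exists_pow_lt_of_lt_one (by positivity : (0:ℝ) < ε/4) (by norm_num : (1:ℝ)/2 < 1)
  refine ⟨N, fun n hn => ?_⟩
  have hbound : ∀ m, dist (u m) ⟨A, hAm⟩ ≤ 4 * (1/2)^m := by
    intro m
    show (lam (symmDiff (u m).1 A)).toReal ≤ 4 * (1/2)^m
    have h1 : lam (symmDiff (u m).1 A) ≤ ∑' k, lam (symmDiff (u (m+k)).1 (u (m+k+1)).1) :=
      le_trans (measure_mono (symmDiff_limsup_subset (fun k => (u k).1) m)) (measure_iUnion_le _)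
    have h2 : ∑' k : ℕ, lam (symmDiff (u (m+k)).1 (u (m+k+1)).1)
        ≤ ∑' k : ℕ, ENNReal.ofReal ((1/2)^(m+k)) := by
      apply ENNReal.tsum_le_tsum
      intro k
      have := hu (m+k) (m+k) (m+k+1) le_rfl (by omega)
      rw [MSetSp.dist_def] at this
      exact le_trans (le_of_lt (by
        rwa [← ENNReal.lt_ofReal_iff_toReal_lt (measure_ne_top _ _)] at this)) le_rfl
    have hsum : ∑' k : ℕ, ((1/2:ℝ)^(m+k)) = 2 * (1/2)^m := by
      simp only [pow_add]
      rw [tsum_mul_left, tsum_geometric_of_lt_one (by norm_num) (by norm_num)]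
      ring
    have hsummable : Summable (fun k : ℕ => ((1/2:ℝ)^(m+k))) := by
      simp only [pow_add]
      exact (summable_geometric_of_lt_one (by norm_num) (by norm_num)).mul_left _
    have h3 : ∑' k : ℕ, ENNReal.ofReal ((1/2:ℝ)^(m+k)) = ENNReal.ofReal (2 * (1/2)^m) := by
      rw [← ENNReal.ofReal_tsum_of_nonneg (fun k => by positivity) hsummable, hsum]
    have hfin : lam (symmDiff (u m).1 A) ≤ ENNReal.ofReal (2 * (1/2)^m) :=
      le_trans h1 (le_trans h2 h3.le)
    calc (lam (symmDiff (u m).1 A)).toReal ≤ 2 * (1/2)^m := by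
          rw [← ENNReal.toReal_ofReal (by positivity : (0:ℝ) ≤ 2 * (1/2)^m)]
          exact ENNReal.toReal_mono ENNReal.ofReal_ne_top hfin
      _ ≤ 4 * (1/2)^m := by nlinarith [pow_pos (by norm_num : (0:ℝ) < 1/2) m]
  have := hbound n
  calc dist (u n) ⟨A, hAm⟩ ≤ 4 * (1/2)^n := this
    _ ≤ 4 * (1/2)^N := by
        have := pow_le_pow_of_le_one (by norm_num : (0:ℝ) ≤ 1/2) (by norm_num) hn
        linarith
    _ < 4 * (ε/4) := by linarith
    _ = ε := by ring

variable {X : Type*} [MeasurableSpace X]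

noncomputable def lamM (μ : Measure X) (T : X → X) : Measure X :=
  Measure.sum (fun i : ℕ => ((2⁻¹ : ℝ≥0∞) ^ (i + 1)) • μ.map (T^[i]))

noncomputable def phiF (μ : Measure X) (T : X → X) (n : ℕ) (A : Set X) : ℝ :=
  (1 / (n : ℝ)) * ∑ i ∈ Finset.range n, (μ (T^[i] ⁻¹' A)).toReal

variable (μ : Measure X) [IsProbabilityMeasure μ] (T : X → X) (hT : Measurable T)

include hT in
lemma lamM_apply {A : Set X} (hA : MeasurableSet A) :
    lamM μ T A = ∑' i : ℕ, (2⁻¹ : ℝ≥0∞) ^ (i + 1) * μ (T^[i] ⁻¹' A) := by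
  rw [lamM, Measure.sum_apply _ hA]
  congr 1; ext i
  rw [Measure.smul_apply, Measure.map_apply (hT.iterate i) hA, smul_eq_mul]

include hT in
lemma lamM_probability : IsProbabilityMeasure (lamM μ T) := by
  constructor
  rw [lamM_apply μ T hT MeasurableSet.univ]
  simp only [Set.preimage_univ, measure_univ, mul_one]
  rw [ENNReal.tsum_geometric_add_one]
  rw [ENNReal.one_sub_inv_two, inv_inv, ENNReal.inv_mul_cancel (by norm_num) (by norm_num)]

include hT in
lemma meas_le_lamM {A : Set X} (hA : MeasurableSet A) (i : ℕ) :
    μ (T^[i] ⁻¹' A) ≤ 2 ^ (i + 1) * lamM μ T A := by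
  have h := ENNReal.le_tsum (f := fun i : ℕ => (2⁻¹ : ℝ≥0∞) ^ (i + 1) * μ (T^[i] ⁻¹' A)) i
  rw [← lamM_apply μ T hT hA] at h
  calc μ (T^[i] ⁻¹' A) = 2 ^ (i+1) * ((2⁻¹ : ℝ≥0∞) ^ (i + 1) * μ (T^[i] ⁻¹' A)) := by
        rw [← mul_assoc, ← mul_pow, ENNReal.mul_inv_cancel (by norm_num) (by norm_num), one_pow, one_mul]
    _ ≤ 2 ^ (i + 1) * lamM μ T A := by gcongr

omit [IsProbabilityMeasure μ] in
lemma phiF_nonneg (n : ℕ) (A : Set X) : 0 ≤ phiF μ T n A := by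
  apply mul_nonneg (by positivity)
  exact Finset.sum_nonneg fun i _ => ENNReal.toReal_nonneg

omit [IsProbabilityMeasure μ] in
lemma toReal_meas_diff_le [IsFiniteMeasure μ] {s t : Set X} :
    |(μ s).toReal - (μ t).toReal| ≤ (μ (symmDiff s t)).toReal := by
  have key : ∀ a b : Set X, μ a ≤ μ b + μ (symmDiff a b) := by
    intro a b
    refine le_trans (measure_mono ?_) (measure_union_le _ _)
    intro x hx
    simp only [Set.mem_union, Set.mem_symmDiff]; tauto
  rw [abs_le]
  constructor
  · have := key t s
    rw [symmDiff_comm] at this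
    have h2 := ENNReal.toReal_mono (by finiteness) this
    rw [ENNReal.toReal_add (measure_ne_top _ _) (measure_ne_top _ _)] at h2
    linarith
  · have h2 := ENNReal.toReal_mono (by finiteness) (key s t)
    rw [ENNReal.toReal_add (measure_ne_top _ _) (measure_ne_top _ _)] at h2
    linarith

include hT in
lemma phiF_diff_le (n : ℕ) {A B : Set X} (hA : MeasurableSet A) (hB : MeasurableSet B) :
    |phiF μ T n A - phiF μ T n B| ≤ 2 ^ n * (lamM μ T (symmDiff A B)).toReal := by
  rcases Nat.eq_zero_or_pos n with rfl | hn
  · simp only [phiF, Finset.range_zero, Finset.sum_empty, mul_zero, sub_zero, abs_zero]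
    positivity
  have hterm : ∀ i ∈ Finset.range n,
      |(μ (T^[i] ⁻¹' A)).toReal - (μ (T^[i] ⁻¹' B)).toReal| ≤ 2 ^ n * (lamM μ T (symmDiff A B)).toReal := by
    intro i hi
    rw [Finset.mem_range] at hi
    refine le_trans (toReal_meas_diff_le μ) ?_
    rw [← Set.preimage_symmDiff]
    have h1 : μ (T^[i] ⁻¹' symmDiff A B) ≤ 2 ^ (i + 1) * lamM μ T (symmDiff A B) :=
      meas_le_lamM μ T hT (hA.symmDiff hB) i
    have h2 := ENNReal.toReal_mono (by
        refine ENNReal.mul_ne_top (by simp) ?_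
        have := lamM_probability μ T hT
        finiteness) h1
    rw [ENNReal.toReal_mul] at h2
    refine le_trans h2 ?_
    have h3 : ((2:ℝ≥0∞) ^ (i+1)).toReal ≤ 2 ^ n := by
      simp only [ENNReal.toReal_pow, ENNReal.toReal_ofNat]
      exact pow_le_pow_right₀ (by norm_num) (by omega)
    exact mul_le_mul_of_nonneg_right h3 ENNReal.toReal_nonneg
  calc |phiF μ T n A - phiF μ T n B|
      = (1/(n:ℝ)) * |∑ i ∈ Finset.range n, ((μ (T^[i] ⁻¹' A)).toReal - (μ (T^[i] ⁻¹' B)).toReal)| := by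
        rw [phiF, phiF, ← mul_sub, abs_mul, Finset.sum_sub_distrib]
        congr 1
        rw [abs_of_nonneg (by positivity)]
    _ ≤ (1/(n:ℝ)) * ∑ i ∈ Finset.range n, |(μ (T^[i] ⁻¹' A)).toReal - (μ (T^[i] ⁻¹' B)).toReal| := by
        gcongr
        exact Finset.abs_sum_le_sum_abs _ _
    _ ≤ (1/(n:ℝ)) * ∑ i ∈ Finset.range n, (2 ^ n * (lamM μ T (symmDiff A B)).toReal) := by
        gcongr with i hi
        exact hterm i hi
    _ = 2 ^ n * (lamM μ T (symmDiff A B)).toReal := by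
        rw [Finset.sum_const, Finset.card_range, nsmul_eq_mul]
        field_simp

include hT in
lemma phiF_union (n : ℕ) {s t : Set X} (hs : MeasurableSet s) (ht : MeasurableSet t)
    (hst : Disjoint s t) : phiF μ T n (s ∪ t) = phiF μ T n s + phiF μ T n t := by
  rw [phiF, phiF, phiF, ← mul_add, ← Finset.sum_add_distrib]
  congr 1
  apply Finset.sum_congr rfl
  intro i _
  rw [Set.preimage_union, measure_union (hst.preimage _) (ht.preimage (hT.iterate i)),
    ENNReal.toReal_add (measure_ne_top _ _) (measure_ne_top _ _)]

include hT in
lemma phiF_lipschitz (n : ℕ) :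
    haveI := lamM_probability μ T hT
    LipschitzWith (2 ^ n) (fun A : MSetSp (lamM μ T) => phiF μ T n A.1) := by
  haveI := lamM_probability μ T hT
  rw [lipschitzWith_iff_dist_le_mul]
  intro A B
  rw [Real.dist_eq, MSetSp.dist_def]
  have := phiF_diff_le μ T hT n A.2 B.2
  refine le_trans this (le_of_eq ?_)
  push_cast
  ring

include hT in
lemma uniform_small
    (hAMS : ∀ A : Set X, MeasurableSet A → ∃ L : ℝ,
      Tendsto (fun n : ℕ => phiF μ T n A) atTop (nhds L))
    {ε : ℝ} (hε : 0 < ε) :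
    ∃ δ > 0, ∃ m₀ : ℕ, ∀ B : Set X, MeasurableSet B → (lamM μ T B).toReal < δ →
      ∀ n p, m₀ ≤ n → m₀ ≤ p → |phiF μ T n B - phiF μ T p B| ≤ 2 * ε := by
  haveI := lamM_probability μ T hT
  set M := MSetSp (lamM μ T)
  set E : ℕ → Set M := fun m => {A | ∀ n p, m ≤ n → m ≤ p → |phiF μ T n A.1 - phiF μ T p A.1| ≤ ε}
    with hE
  have hclosed : ∀ m, IsClosed (E m) := by
    intro m
    have : E m = ⋂ n, ⋂ p, {A : M | m ≤ n → m ≤ p → |phiF μ T n A.1 - phiF μ T p A.1| ≤ ε} := by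
      ext A; simp only [Set.mem_iInter, Set.mem_setOf_eq, hE]
    rw [this]
    refine isClosed_iInter fun n => isClosed_iInter fun p => ?_
    by_cases hn : m ≤ n
    · by_cases hp : m ≤ p
      · have : {A : M | m ≤ n → m ≤ p → |phiF μ T n A.1 - phiF μ T p A.1| ≤ ε}
            = {A : M | |phiF μ T n A.1 - phiF μ T p A.1| ≤ ε} := by
          ext A; simp [hn, hp]
        rw [this]
        exact isClosed_le (Continuous.abs (Continuous.sub
          ((phiF_lipschitz μ T hT n).continuous) ((phiF_lipschitz μ T hT p).continuous)))
          continuous_const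
      · have : {A : M | m ≤ n → m ≤ p → |phiF μ T n A.1 - phiF μ T p A.1| ≤ ε} = Set.univ := by
          ext A; simp [hp]
        rw [this]; exact isClosed_univ
    · have : {A : M | m ≤ n → m ≤ p → |phiF μ T n A.1 - phiF μ T p A.1| ≤ ε} = Set.univ := by
        ext A; simp [hn]
      rw [this]; exact isClosed_univ
  have hcover : (⋃ m, E m) = Set.univ := by
    rw [Set.eq_univ_iff_forall]
    intro A
    obtain ⟨L, hL⟩ := hAMS A.1 A.2
    have hc : CauchySeq (fun n => phiF μ T n A.1) := hL.cauchySeq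
    rw [Metric.cauchySeq_iff] at hc
    obtain ⟨m, hm⟩ := hc ε hε
    refine Set.mem_iUnion.mpr ⟨m, fun n p hn hp => ?_⟩
    have := hm n hn p hp
    rw [Real.dist_eq] at this
    exact this.le
  haveI : Nonempty M := ⟨⟨∅, MeasurableSet.empty⟩⟩
  obtain ⟨m₀, hint⟩ := nonempty_interior_of_iUnion_of_closed hclosed hcover
  obtain ⟨A₀, hA₀⟩ := hint
  obtain ⟨δ, hδpos, hball⟩ := Metric.isOpen_iff.mp isOpen_interior A₀ hA₀
  refine ⟨δ, hδpos, m₀, fun B hB hBsmall n p hn hp => ?_⟩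
  have hsub : Metric.ball A₀ δ ⊆ E m₀ := le_trans hball interior_subset
  set U : M := ⟨A₀.1 ∪ B, A₀.2.union hB⟩
  set D : M := ⟨A₀.1 \ B, A₀.2.diff hB⟩
  have hUball : U ∈ Metric.ball A₀ δ := by
    rw [Metric.mem_ball, MSetSp.dist_def]
    refine lt_of_le_of_lt (ENNReal.toReal_mono (measure_ne_top _ _) (measure_mono ?_)) hBsmall
    intro x hx
    rw [Set.mem_symmDiff] at hx
    simp only [U, Set.mem_union] at hx
    tauto
  have hDball : D ∈ Metric.ball A₀ δ := by
    rw [Metric.mem_ball, MSetSp.dist_def]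
    refine lt_of_le_of_lt (ENNReal.toReal_mono (measure_ne_top _ _) (measure_mono ?_)) hBsmall
    intro x hx
    rw [Set.mem_symmDiff] at hx
    simp only [D, Set.mem_diff] at hx
    tauto
  have hU := hsub hUball
  have hD := hsub hDball
  have hdecomp : ∀ k : ℕ, phiF μ T k B = phiF μ T k U.1 - phiF μ T k D.1 := by
    intro k
    have hun : U.1 = D.1 ∪ B := by
      ext x; simp only [U, D, Set.mem_union, Set.mem_diff]; tauto
    have := phiF_union μ T hT k (A₀.2.diff hB) hB Set.disjoint_sdiff_left
    rw [← hun] at this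
    rw [this]; ring
  rw [hdecomp n, hdecomp p]
  have h1 := hU n p hn hp
  have h2 := hD n p hn hp
  calc |phiF μ T n U.1 - phiF μ T n D.1 - (phiF μ T p U.1 - phiF μ T p D.1)|
      ≤ |phiF μ T n U.1 - phiF μ T p U.1| + |phiF μ T n D.1 - phiF μ T p D.1| := by
        have heq : phiF μ T n U.1 - phiF μ T n D.1 - (phiF μ T p U.1 - phiF μ T p D.1)
            = (phiF μ T n U.1 - phiF μ T p U.1) - (phiF μ T n D.1 - phiF μ T p D.1) := by ring
        rw [heq]
        exact abs_sub _ _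
    _ ≤ ε + ε := add_le_add h1 h2
    _ = 2 * ε := by ring

omit [IsProbabilityMeasure μ] in
lemma phiF_empty (n : ℕ) : phiF μ T n ∅ = 0 := by simp [phiF]


end Aux

theorem stationary_mean_is_stationary_probability_measure
    {X : Type*} [MeasurableSpace X] (μ : Measure X) [IsProbabilityMeasure μ]
    (T : X → X) (hT : Measurable T)
    (hAMS : ∀ A : Set X, MeasurableSet A → ∃ L : ℝ,
      Tendsto (fun n : ℕ => (1 / (n : ℝ)) * ∑ i ∈ Finset.range n, (μ (T^[i] ⁻¹' A)).toReal)
        atTop (nhds L)) :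
    ∃ ν : Measure X, IsProbabilityMeasure ν ∧
      (∀ A : Set X, MeasurableSet A →
        Tendsto (fun n : ℕ => (1 / (n : ℝ)) * ∑ i ∈ Finset.range n, (μ (T^[i] ⁻¹' A)).toReal)
          atTop (nhds (ν A).toReal)) ∧
      (∀ A : Set X, MeasurableSet A → ν (T ⁻¹' A) = ν A) := by
  haveI := lamM_probability μ T hT
  choose L hL using hAMS
  have hphi : ∀ (A : Set X) (hA : MeasurableSet A),
      Tendsto (fun n : ℕ => phiF μ T n A) atTop (nhds (L A hA)) := hL
  have hLnn : ∀ (A : Set X) (hA : MeasurableSet A), 0 ≤ L A hA :=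
    fun A hA => ge_of_tendsto' (hphi A hA) (fun n => phiF_nonneg μ T n A)
  -- vanishing along tails of disjoint unions
  have hvanish : ∀ (f : ℕ → Set X) (hf : ∀ k, MeasurableSet (f k))
      (hdisj : Pairwise (Function.onFun Disjoint f)),
      Tendsto (fun K : ℕ => L (⋃ k, f (K + k)) (MeasurableSet.iUnion (fun k => hf (K + k))))
        atTop (nhds 0) := by
    intro f hf hdisj
    set R : ℕ → Set X := fun K => ⋃ k, f (K + k) with hR
    have hRm : ∀ K, MeasurableSet (R K) := fun K => MeasurableSet.iUnion (fun k => hf (K + k))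
    have hRanti : Antitone R := by
      intro K K' hKK' x hx
      obtain ⟨k, hk⟩ := Set.mem_iUnion.mp hx
      exact Set.mem_iUnion.mpr ⟨K' - K + k, by rwa [show K + (K' - K + k) = K' + k by omega]⟩
    have hRempty : (⋂ K, R K) = ∅ := by
      rw [Set.eq_empty_iff_forall_notMem]
      intro x hx
      have h0 := Set.mem_iInter.mp hx 0
      obtain ⟨k₀, hk₀⟩ := Set.mem_iUnion.mp h0
      have h1 := Set.mem_iInter.mp hx (k₀ + 1)
      obtain ⟨k₁, hk₁⟩ := Set.mem_iUnion.mp h1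
      have hne : 0 + k₀ ≠ k₀ + 1 + k₁ := by omega
      exact Set.disjoint_left.mp (hdisj hne) hk₀ hk₁
    have hlamR : Tendsto (fun K => (lamM μ T (R K)).toReal) atTop (nhds 0) := by
      have h1 : Tendsto (fun K => lamM μ T (R K)) atTop (nhds 0) := by
        have := tendsto_measure_iInter_atTop (μ := lamM μ T)
          (fun K => (hRm K).nullMeasurableSet) hRanti ⟨0, measure_ne_top _ _⟩
        rwa [hRempty, measure_empty] at this
      have h2 := (ENNReal.tendsto_toReal (by simp : (0:ℝ≥0∞) ≠ ⊤)).comp h1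
      exact h2
    rw [Metric.tendsto_atTop]
    intro ε hε
    obtain ⟨δ, hδpos, m₀, hunif⟩ := uniform_small μ T hT (fun A hA => ⟨L A hA, hphi A hA⟩) (ε := ε/8) (by linarith)
    -- φ_{m₀} (R K) is Lipschitz-small
    rw [Metric.tendsto_atTop] at hlamR
    obtain ⟨K₀, hK₀⟩ := hlamR (min δ (ε / (8 * 2 ^ m₀))) (by positivity)
    refine ⟨K₀, fun K hK => ?_⟩
    have hsmall := hK₀ K hK
    rw [Real.dist_eq, sub_zero, abs_of_nonneg ENNReal.toReal_nonneg] at hsmall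
    have hδ' : (lamM μ T (R K)).toReal < δ := lt_of_lt_of_le hsmall (min_le_left _ _)
    have hm₀bd : phiF μ T m₀ (R K) ≤ ε / 8 := by
      have hlip := phiF_diff_le μ T hT m₀ (hRm K) MeasurableSet.empty
      have hsd : symmDiff (R K) (∅ : Set X) = R K := by simp [Set.symmDiff_def]
      rw [phiF_empty, sub_zero, hsd] at hlip
      rw [abs_of_nonneg (phiF_nonneg μ T m₀ (R K))] at hlip
      refine le_trans hlip ?_
      have h3 : (lamM μ T (R K)).toReal ≤ ε / (8 * 2 ^ m₀) :=
        le_of_lt (lt_of_lt_of_le hsmall (min_le_right _ _))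
      calc (2:ℝ) ^ m₀ * (lamM μ T (R K)).toReal ≤ 2 ^ m₀ * (ε / (8 * 2 ^ m₀)) := by
            gcongr
        _ = ε / 8 := by field_simp
    have hbound : ∀ p, m₀ ≤ p → phiF μ T p (R K) ≤ ε / 2 := by
      intro p hp
      have := hunif (R K) (hRm K) hδ' p m₀ hp le_rfl
      have habs := (abs_le.mp this).2
      have : phiF μ T p (R K) ≤ phiF μ T m₀ (R K) + 2 * (ε/8) := by linarith
      linarith
    have hLle : L (R K) (hRm K) ≤ ε / 2 := by
      refine le_of_tendsto (hphi (R K) (hRm K)) ?_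
      filter_upwards [eventually_ge_atTop m₀] with p hp
      exact hbound p hp
    rw [Real.dist_eq, sub_zero, abs_of_nonneg (hLnn _ _)]
    calc L (R K) (hRm K) ≤ ε / 2 := hLle
      _ < ε := by linarith
  -- finite decomposition identity
  have hdecomp : ∀ (f : ℕ → Set X) (hf : ∀ k, MeasurableSet (f k))
      (hdisj : Pairwise (Function.onFun Disjoint f)) (p K : ℕ),
      phiF μ T p (⋃ k, f k) = (∑ k ∈ Finset.range K, phiF μ T p (f k))
        + phiF μ T p (⋃ k, f (K + k)) := by
    intro f hf hdisj p K
    induction K with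
    | zero => simp
    | succ K ih =>
      have hsplit : (⋃ k, f (K + k)) = f K ∪ ⋃ k, f (K + 1 + k) := by
        ext x
        simp only [Set.mem_iUnion, Set.mem_union]
        constructor
        · rintro ⟨k, hk⟩
          rcases Nat.eq_zero_or_pos k with rfl | hkpos
          · left; simpa using hk
          · right; exact ⟨k - 1, by rwa [show K + 1 + (k - 1) = K + k by omega]⟩
        · rintro (h | ⟨k, hk⟩)
          · exact ⟨0, by simpa using h⟩
          · exact ⟨k + 1, by rwa [show K + (k + 1) = K + 1 + k by omega]⟩
      have hdisjK : Disjoint (f K) (⋃ k, f (K + 1 + k)) := by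
        rw [Set.disjoint_iUnion_right]
        intro k
        exact hdisj (by omega : K ≠ K + 1 + k)
      rw [ih, hsplit, phiF_union μ T hT p (hf K) (MeasurableSet.iUnion fun k => hf (K+1+k)) hdisjK,
        Finset.sum_range_succ]
      ring
  -- countable additivity of L
  have hsigma : ∀ (f : ℕ → Set X) (hf : ∀ k, MeasurableSet (f k))
      (hdisj : Pairwise (Function.onFun Disjoint f)),
      HasSum (fun k => L (f k) (hf k)) (L (⋃ k, f k) (MeasurableSet.iUnion hf)) := by
    intro f hf hdisj
    rw [hasSum_iff_tendsto_nat_of_nonneg (fun k => hLnn _ _)]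
    have hidentity : ∀ K, (∑ k ∈ Finset.range K, L (f k) (hf k))
        = L (⋃ k, f k) (MeasurableSet.iUnion hf)
          - L (⋃ k, f (K + k)) (MeasurableSet.iUnion fun k => hf (K + k)) := by
      intro K
      have t1 : Tendsto (fun p => phiF μ T p (⋃ k, f k)) atTop
          (nhds (L (⋃ k, f k) (MeasurableSet.iUnion hf))) := hphi _ _
      have t2 : Tendsto (fun p => (∑ k ∈ Finset.range K, phiF μ T p (f k))
          + phiF μ T p (⋃ k, f (K + k))) atTop
          (nhds ((∑ k ∈ Finset.range K, L (f k) (hf k))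
            + L (⋃ k, f (K + k)) (MeasurableSet.iUnion fun k => hf (K + k)))) := by
        exact Tendsto.add (tendsto_finset_sum _ fun k _ => hphi _ _) (hphi _ _)
      have heq : (fun p => phiF μ T p (⋃ k, f k)) = (fun p =>
          (∑ k ∈ Finset.range K, phiF μ T p (f k)) + phiF μ T p (⋃ k, f (K + k))) := by
        funext p; exact hdecomp f hf hdisj p K
      rw [heq] at t1
      have := tendsto_nhds_unique t1 t2
      linarith [this]
    have : (fun K => ∑ k ∈ Finset.range K, L (f k) (hf k)) = (fun K =>
        L (⋃ k, f k) (MeasurableSet.iUnion hf)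
          - L (⋃ k, f (K + k)) (MeasurableSet.iUnion fun k => hf (K + k))) := by
      funext K; exact hidentity K
    rw [this]
    have := (hvanish f hf hdisj).const_sub (L (⋃ k, f k) (MeasurableSet.iUnion hf))
    simpa using this
  -- construct the measure
  set ν : Measure X := Measure.ofMeasurable (fun A hA => ENNReal.ofReal (L A hA))
    (by
      have h0 : Tendsto (fun n => phiF μ T n (∅ : Set X)) atTop (nhds 0) := by
        simp only [phiF_empty]; exact tendsto_const_nhds
      have := tendsto_nhds_unique (hphi ∅ MeasurableSet.empty) h0
      simp [this])
    (by
      intro f hf hdisj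
      have hs := hsigma f hf hdisj
      show ENNReal.ofReal _ = ∑' i, ENNReal.ofReal _
      rw [← ENNReal.ofReal_tsum_of_nonneg (fun k => hLnn _ _) hs.summable]
      congr 1
      exact hs.tsum_eq.symm)
    with hν
  have hνapply : ∀ (A : Set X) (hA : MeasurableSet A), ν A = ENNReal.ofReal (L A hA) :=
    fun A hA => Measure.ofMeasurable_apply A hA
  have hνtoReal : ∀ (A : Set X) (hA : MeasurableSet A), (ν A).toReal = L A hA := by
    intro A hA
    rw [hνapply A hA, ENNReal.toReal_ofReal (hLnn A hA)]
  refine ⟨ν, ?_, ?_, ?_⟩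
  · constructor
    rw [hνapply Set.univ MeasurableSet.univ]
    have huniv : Tendsto (fun n => phiF μ T n (Set.univ : Set X)) atTop (nhds 1) := by
      have hev : (fun _ : ℕ => (1:ℝ)) =ᶠ[atTop] (fun n => phiF μ T n (Set.univ : Set X)) := by
        filter_upwards [eventually_ge_atTop 1] with n hn
        symm
        rw [phiF]
        simp only [Set.preimage_univ, measure_univ, ENNReal.toReal_one, Finset.sum_const,
          Finset.card_range, smul_eq_mul, mul_one]
        field_simp
        simp
      exact tendsto_const_nhds.congr' hev
    have := tendsto_nhds_unique (hphi Set.univ MeasurableSet.univ) huniv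
    rw [this]
    exact ENNReal.ofReal_one
  · intro A hA
    rw [hνtoReal A hA]
    exact hphi A hA
  · intro A hA
    rw [hνapply _ (hA.preimage hT), hνapply A hA]
    congr 1
    -- L (T⁻¹ A) = L A
    have hiter : ∀ i : ℕ, T^[i] ⁻¹' (T ⁻¹' A) = T^[i+1] ⁻¹' A := by
      intro i
      ext x
      simp only [Set.mem_preimage, Function.iterate_succ_apply']
    have hshift : ∀ n : ℕ, phiF μ T n (T ⁻¹' A)
        = phiF μ T n A + (1/(n:ℝ)) * ((μ (T^[n] ⁻¹' A)).toReal - (μ A).toReal) := by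
      intro n
      rw [phiF, phiF]
      have : ∑ i ∈ Finset.range n, (μ (T^[i] ⁻¹' (T ⁻¹' A))).toReal
          = ∑ i ∈ Finset.range n, (μ (T^[i+1] ⁻¹' A)).toReal := by
        apply Finset.sum_congr rfl
        intro i _
        rw [hiter i]
      rw [this]
      have hsum : ∑ i ∈ Finset.range n, (μ (T^[i+1] ⁻¹' A)).toReal
          = (∑ i ∈ Finset.range n, (μ (T^[i] ⁻¹' A)).toReal)
            + (μ (T^[n] ⁻¹' A)).toReal - (μ (T^[0] ⁻¹' A)).toReal := by
        have e1 := Finset.sum_range_succ' (fun i => (μ (T^[i] ⁻¹' A)).toReal) n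
        have e2 := Finset.sum_range_succ (fun i => (μ (T^[i] ⁻¹' A)).toReal) n
        linarith
      rw [hsum]
      simp only [Function.iterate_zero, Set.preimage_id, Set.preimage_id']
      ring
    have hcorr : Tendsto (fun n : ℕ => (1/(n:ℝ)) * ((μ (T^[n] ⁻¹' A)).toReal - (μ A).toReal))
        atTop (nhds 0) := by
      apply squeeze_zero_norm (a := fun n : ℕ => 2 * (1/(n:ℝ)))
      · intro n
        rw [Real.norm_eq_abs, abs_mul]
        have h1 : |(1:ℝ)/(n:ℝ)| = 1/(n:ℝ) := abs_of_nonneg (by positivity)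
        rw [h1, mul_comm]
        apply mul_le_mul_of_nonneg_right _ (by positivity)
        have hb : ∀ s : Set X, (μ s).toReal ≤ 1 := by
          intro s
          rw [← ENNReal.toReal_one]
          exact ENNReal.toReal_mono (by simp) prob_le_one
        rw [abs_le]
        constructor <;> [skip; skip] <;>
          · have := hb (T^[n] ⁻¹' A); have := hb A
            have := ENNReal.toReal_nonneg (a := μ (T^[n] ⁻¹' A))
            have := ENNReal.toReal_nonneg (a := μ A)
            linarith
      · have := tendsto_one_div_atTop_nhds_zero_nat (𝕜 := ℝ)
        have h2 := this.const_mul (2:ℝ)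
        simpa using h2
    have t1 : Tendsto (fun n => phiF μ T n (T ⁻¹' A)) atTop (nhds (L A hA)) := by
      have heq : (fun n => phiF μ T n (T ⁻¹' A)) = (fun n =>
          phiF μ T n A + (1/(n:ℝ)) * ((μ (T^[n] ⁻¹' A)).toReal - (μ A).toReal)) := by
        funext n; exact hshift n
      rw [heq]
      have := (hphi A hA).add hcorr
      simpa using this
    exact tendsto_nhds_unique (hphi _ (hA.preimage hT)) t1
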